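/- Let u : L ⟶ M be a morphism of ℤ-indexed cochain complexes of abelian groups, let q : N ⟶ M be a quasi-isomorphism, let F ⊆ N be a subcomplex with inclusion i and quotient complex N/F, and let φ : L ⊕ F ⟶ M be the morphism φ(l,x) = u(l) + q(i(x)). For each integer n let π_n : H^n(Cone(φ)) → H^n(L) be the map induced by the degreewise projection Cone(φ)^n = L^n ⊕ F^n ⊕ M^{n−1} → L^n, and let β_n : H^n(L) → H^n(N/F) be the map sending a class α to the image in H^n(N/F) of the unique class in H^n(N) that is mapped by the isomorphism H^n(q) to H^n(u)(α). Then there exist homomorphisms δ_n : H^n(N/F) → H^{n+1}(Cone(φ)) making the sequence ⋯ → H^n(N/F) →δ_n H^{n+1}(Cone(φ)) →π_{n+1} H^{n+1}(L) →β_{n+1} H^{n+1}(N/F) →δ_{n+1} H^{n+2}(Cone(φ)) → ⋯ exact. -/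

import Mathlib

/-! Basic framework: ℤ-indexed cochain complexes of abelian groups, chain maps,
cohomology, mapping cones (with the sign convention
`d(a,b) = (d a, (-1)^(n+1) f a + d b)`), brutal truncations. -/

universe u

structure Cplx : Type (u + 1) where
  X : ℤ → Type u
  inst : ∀ n, AddCommGroup (X n)
  d : ∀ n, X n →+ X (n + 1)
  dsq : ∀ (n : ℤ) (x : X n), d (n + 1) (d n x) = 0

attribute [instance] Cplx.inst

namespace Cplx

/-- Transport along an equality of degrees. -/
def tr (C : Cplx) {m n : ℤ} (h : m = n) : C.X m →+ C.X n where
  toFun x := _root_.cast (congrArg C.X h) x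
  map_zero' := by subst h; rfl
  map_add' := by subst h; intros; rfl

lemma tr_tr (C : Cplx) {m n p : ℤ} (h1 : m = n) (h2 : n = p) (x : C.X m) :
    C.tr h2 (C.tr h1 x) = C.tr (h1.trans h2) x := by subst h1; subst h2; rfl

lemma d_tr (C : Cplx) {m n : ℤ} (h : m = n) (x : C.X m) :
    C.d n (C.tr h x) = C.tr (congrArg (· + 1) h) (C.d m x) := by subst h; rfl

/-- Morphisms of cochain complexes. -/
structure Hom (A B : Cplx) where
  f : ∀ n, A.X n →+ B.X n
  comm : ∀ (n : ℤ) (x : A.X n), f (n + 1) (A.d n x) = B.d n (f n x)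

def Hom.comp {A B C : Cplx} (g : Hom B C) (h : Hom A B) : Hom A C where
  f n := (g.f n).comp (h.f n)
  comm n x := by simp only [AddMonoidHom.comp_apply, h.comm, g.comm]

lemma Hom.f_tr {A B : Cplx} (g : Hom A B) {m n : ℤ} (h : m = n) (x : A.X m) :
    g.f n (A.tr h x) = B.tr h (g.f m x) := by subst h; rfl

/-- The subgroup of cocycles in degree `n`. -/
def Zc (C : Cplx) (n : ℤ) : AddSubgroup (C.X n) := (C.d n).ker

lemma mem_Zc {C : Cplx} {n : ℤ} {x : C.X n} : x ∈ C.Zc n ↔ C.d n x = 0 :=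
  AddMonoidHom.mem_ker

/-- The subgroup of coboundaries in degree `n`. -/
def Bd (C : Cplx) (n : ℤ) : AddSubgroup (C.X n) :=
  AddSubgroup.map (C.tr (show n - 1 + 1 = n by omega)) (C.d (n - 1)).range

/-- The `n`-th cohomology group. -/
def H (C : Cplx) (n : ℤ) : Type u :=
  ↥(C.Zc n) ⧸ (C.Bd n).addSubgroupOf (C.Zc n)

instance (C : Cplx) (n : ℤ) : AddCommGroup (C.H n) :=
  inferInstanceAs (AddCommGroup (↥(C.Zc n) ⧸ (C.Bd n).addSubgroupOf (C.Zc n)))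

/-- The cohomology class of a cocycle. -/
def clsOf (C : Cplx) (n : ℤ) (x : C.X n) (hx : x ∈ C.Zc n) : C.H n :=
  QuotientAddGroup.mk (⟨x, hx⟩ : C.Zc n)

/-- The map induced on cocycles by a chain map. -/
def zMap {A B : Cplx} (g : Hom A B) (n : ℤ) : ↥(A.Zc n) →+ ↥(B.Zc n) :=
  AddMonoidHom.codRestrict ((g.f n).comp (A.Zc n).subtype) (B.Zc n) (fun x => by
    have hx : A.d n ((A.Zc n).subtype x) = 0 := mem_Zc.mp x.2
    exact mem_Zc.mpr (by rw [AddMonoidHom.comp_apply, ← g.comm, hx, map_zero]))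

/-- The map induced on cohomology by a chain map. -/
def Hmap {A B : Cplx} (g : Hom A B) (n : ℤ) : A.H n →+ B.H n :=
  QuotientAddGroup.map _ _ (zMap g n) (by
    intro x hx
    rw [AddSubgroup.mem_comap, AddSubgroup.mem_addSubgroupOf]
    rw [AddSubgroup.mem_addSubgroupOf] at hx
    obtain ⟨y, hy, hxy⟩ := hx
    obtain ⟨z, rfl⟩ := hy
    have hcoe : ((zMap g n x : ↥(B.Zc n)) : B.X n) = g.f n (x : A.X n) := rfl
    rw [hcoe, ← hxy, Hom.f_tr]
    exact AddSubgroup.mem_map.mpr ⟨B.d (n - 1) (g.f (n - 1) z),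
      AddMonoidHom.mem_range.mpr ⟨g.f (n - 1) z, rfl⟩, by rw [g.comm]⟩)

/-- Direct sum of two cochain complexes. -/
def dsum (A B : Cplx) : Cplx where
  X n := A.X n × B.X n
  inst n := inferInstance
  d n := (A.d n).prodMap (B.d n)
  dsq n x := by
    show (A.d (n + 1) (A.d n x.1), B.d (n + 1) (B.d n x.2)) = 0
    rw [A.dsq, B.dsq]; rfl

/-- The morphism `L ⊕ F ⟶ M`, `(l, x) ↦ u l + g x`. -/
def sumHom {L F M : Cplx} (u : Hom L M) (g : Hom F M) : Hom (dsum L F) M where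
  f n := (u.f n).coprod (g.f n)
  comm n x := by
    show u.f (n + 1) (L.d n x.1) + g.f (n + 1) (F.d n x.2) =
      M.d n (u.f n x.1 + g.f n x.2)
    rw [map_add, u.comm, g.comm]

/-- The mapping cone of a chain map, with differential
`d (a, b) = (d a, (-1)^(n+1) • g a + d b)`. -/
def cone {A B : Cplx} (g : Hom A B) : Cplx where
  X n := A.X n × B.X (n - 1)
  inst n := inferInstance
  d n := AddMonoidHom.mk' (fun p =>
      (A.d n p.1,
        B.tr (show n = n + 1 - 1 by omega) ((Int.negOnePow (n + 1) : ℤ) • g.f n p.1) +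
          B.tr (show n - 1 + 1 = n + 1 - 1 by omega) (B.d (n - 1) p.2)))
    (fun p q => by
      refine Prod.ext (map_add _ _ _) ?_
      show B.tr _ ((Int.negOnePow (n + 1) : ℤ) • g.f n (p.1 + q.1)) +
          B.tr _ (B.d (n - 1) (p.2 + q.2)) = _
      rw [map_add (g.f n), smul_add, map_add, map_add (B.d (n - 1)), map_add]
      simp only [Prod.snd_add]
      abel)
  dsq n p := by
    refine Prod.ext (A.dsq n p.1) ?_
    show B.tr (show n + 1 = n + 1 + 1 - 1 by omega)
          ((Int.negOnePow (n + 1 + 1) : ℤ) • g.f (n + 1) (A.d n p.1)) +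
        B.tr (show n + 1 - 1 + 1 = n + 1 + 1 - 1 by omega)
          (B.d (n + 1 - 1)
            (B.tr (show n = n + 1 - 1 by omega) ((Int.negOnePow (n + 1) : ℤ) • g.f n p.1) +
              B.tr (show n - 1 + 1 = n + 1 - 1 by omega) (B.d (n - 1) p.2))) = 0
    rw [map_add (B.d (n + 1 - 1)), d_tr, d_tr, map_add (B.tr _), tr_tr, tr_tr,
      B.dsq (n - 1) p.2, map_zero, add_zero, g.comm n p.1,
      map_zsmul (B.d n)]
    show B.tr (show n + 1 = n + 1 + 1 - 1 by omega)
        ((Int.negOnePow (n + 1 + 1) : ℤ) • B.d n (g.f n p.1)) +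
      B.tr (show n + 1 = n + 1 + 1 - 1 by omega)
        ((Int.negOnePow (n + 1) : ℤ) • B.d n (g.f n p.1)) = 0
    rw [← map_add, ← add_smul]
    have : ((Int.negOnePow (n + 1 + 1) : ℤ) + (Int.negOnePow (n + 1) : ℤ)) = 0 := by
      rw [Int.negOnePow_succ (n + 1), Units.val_neg, neg_add_cancel]
    rw [this, zero_smul, map_zero]

/-- A subcomplex determined by a `d`-stable family of subgroups. -/
def subCplx (C : Cplx) (S : ∀ n, AddSubgroup (C.X n))
    (hS : ∀ (n : ℤ) (x : C.X n), x ∈ S n → C.d n x ∈ S (n + 1)) : Cplx where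
  X n := S n
  inst n := inferInstance
  d n := AddMonoidHom.codRestrict ((C.d n).comp (S n).subtype) (S (n + 1))
    (fun x => hS n x.1 x.2)
  dsq n x := Subtype.ext (C.dsq n x.1)

/-- The inclusion of a subcomplex. -/
def subIncl (C : Cplx) (S : ∀ n, AddSubgroup (C.X n))
    (hS : ∀ (n : ℤ) (x : C.X n), x ∈ S n → C.d n x ∈ S (n + 1)) :
    Hom (subCplx C S hS) C where
  f n := (S n).subtype
  comm _ _ := rfl

/-- The quotient complex by a `d`-stable family of subgroups. -/
def quotCplx (C : Cplx) (S : ∀ n, AddSubgroup (C.X n))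
    (hS : ∀ (n : ℤ) (x : C.X n), x ∈ S n → C.d n x ∈ S (n + 1)) : Cplx where
  X n := C.X n ⧸ S n
  inst n := inferInstance
  d n := QuotientAddGroup.map (S n) (S (n + 1)) (C.d n) (fun x hx => by
    rw [AddSubgroup.mem_comap]; exact hS n x hx)
  dsq n x := by
    induction x using QuotientAddGroup.induction_on with
    | H z =>
      show QuotientAddGroup.map _ _ _ _ (QuotientAddGroup.map _ _ _ _ ((z : C.X n ⧸ S n))) = 0
      rw [QuotientAddGroup.map_mk, QuotientAddGroup.map_mk, C.dsq]
      rfl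

/-- The projection onto a quotient complex. -/
def quotProj (C : Cplx) (S : ∀ n, AddSubgroup (C.X n))
    (hS : ∀ (n : ℤ) (x : C.X n), x ∈ S n → C.d n x ∈ S (n + 1)) :
    Hom C (quotCplx C S hS) where
  f n := QuotientAddGroup.mk' (S n)
  comm _ _ := rfl

/-- The family of subgroups defining the brutal truncation `σ_{≥k}`. -/
def geSub (F : Cplx) (k n : ℤ) : AddSubgroup (F.X n) := if k ≤ n then ⊤ else ⊥

lemma geSub_stable (F : Cplx) (k : ℤ) :
    ∀ (n : ℤ) (x : F.X n), x ∈ geSub F k n → F.d n x ∈ geSub F k (n + 1) := by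
  intro n x hx
  by_cases h : k ≤ n + 1
  · simp [geSub, h]
  · have h' : ¬ k ≤ n := by omega
    simp only [geSub, h', if_neg, if_false, AddSubgroup.mem_bot] at hx
    simp [geSub, h, hx]

/-- The brutal truncation `σ_{≥k} F` (a subcomplex of `F`). -/
def truncGE (F : Cplx) (k : ℤ) : Cplx := subCplx F (geSub F k) (geSub_stable F k)

/-- The inclusion `σ_{≥k} F ⟶ F`. -/
def truncGEincl (F : Cplx) (k : ℤ) : Hom (truncGE F k) F :=
  subIncl F (geSub F k) (geSub_stable F k)

/-- The brutal truncation `σ_{<k} F` (a quotient complex of `F`). -/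
def truncLT (F : Cplx) (k : ℤ) : Cplx := quotCplx F (geSub F k) (geSub_stable F k)

/-- The projection `F ⟶ σ_{<k} F`. -/
def truncLTproj (F : Cplx) (k : ℤ) : Hom F (truncLT F k) :=
  quotProj F (geSub F k) (geSub_stable F k)

end Cplx

open Cplx in
/-- The projection `Cone(φ) → L` onto the first summand, as a chain map. -/
def Cplx.coneProjL {L F M : Cplx} (u : Cplx.Hom L M) (g : Cplx.Hom F M) :
    Cplx.Hom (cone (sumHom u g)) L where
  f n := (AddMonoidHom.fst (L.X n) (F.X n)).comp
      (AddMonoidHom.fst ((dsum L F).X n) (M.X (n - 1)))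
  comm _ _ := rfl

namespace Cplx

lemma tr_refl (C : Cplx) {n : ℤ} (h : n = n) (x : C.X n) : C.tr h x = x := cast_eq (congrArg C.X h) x

lemma tr_proof_irrel (C : Cplx) {m n : ℤ} (h h' : m = n) (x : C.X m) :
    C.tr h x = C.tr h' x := rfl

lemma tr_eq_zero (C : Cplx) {m n : ℤ} (h : m = n) (x : C.X m) :
    C.tr h x = 0 ↔ x = 0 := by subst h; simp [tr_refl]

lemma tr_inj (C : Cplx) {m n : ℤ} (h : m = n) {x y : C.X m} :
    C.tr h x = C.tr h y ↔ x = y := by subst h; simp [tr_refl]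

lemma tr_add_tr (C : Cplx) {a b c : ℤ} (h1 : a = c) (h2 : b = c) (x : C.X a) (y : C.X b) :
    C.tr h1 x + C.tr h2 y = C.tr h1 (x + C.tr (h2.trans h1.symm) y) := by
  subst h1; subst h2; simp [tr_refl]

lemma mem_Bd_iff (C : Cplx) {m n : ℤ} (h : m + 1 = n) (x : C.X n) :
    x ∈ C.Bd n ↔ ∃ y : C.X m, C.tr h (C.d m y) = x := by
  subst h
  constructor
  · rintro ⟨w, hw, rfl⟩
    obtain ⟨y, rfl⟩ := hw
    exact ⟨C.tr (show m + 1 - 1 = m by omega) y,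
      by rw [d_tr, tr_tr]⟩
  · rintro ⟨y, rfl⟩
    exact ⟨_, ⟨C.tr (show m = m + 1 - 1 by omega) y, rfl⟩, by rw [d_tr, tr_tr]⟩

lemma clsOf_eq_iff (C : Cplx) {n : ℤ} {x y : C.X n} (hx : x ∈ C.Zc n) (hy : y ∈ C.Zc n) :
    clsOf C n x hx = clsOf C n y hy ↔ y - x ∈ C.Bd n := by
  rw [clsOf, clsOf]; erw [QuotientAddGroup.eq, AddSubgroup.mem_addSubgroupOf]
  have : ((-(⟨x, hx⟩ : C.Zc n) + ⟨y, hy⟩ : C.Zc n) : C.X n) = y - x := by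
    simp [sub_eq_neg_add]
  rw [this]

lemma clsOf_congr (C : Cplx) {n : ℤ} {x y : C.X n} (hx : x ∈ C.Zc n) (hy : y ∈ C.Zc n)
    (h : x = y) : clsOf C n x hx = clsOf C n y hy := by subst h; rfl

lemma clsOf_zero (C : Cplx) {n : ℤ} (h : (0 : C.X n) ∈ C.Zc n) : clsOf C n 0 h = 0 := rfl

lemma clsOf_eq_zero_iff (C : Cplx) {n : ℤ} {x : C.X n} (hx : x ∈ C.Zc n) :
    clsOf C n x hx = 0 ↔ x ∈ C.Bd n := by
  have h0 : (0 : C.X n) ∈ C.Zc n := zero_mem _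
  rw [show (0 : C.H n) = clsOf C n 0 h0 from rfl, eq_comm, clsOf_eq_iff]
  simp

lemma clsOf_add (C : Cplx) {n : ℤ} {x y : C.X n} (hx : x ∈ C.Zc n) (hy : y ∈ C.Zc n)
    (hxy : x + y ∈ C.Zc n) :
    clsOf C n x hx + clsOf C n y hy = clsOf C n (x + y) hxy := rfl

lemma H_surj (C : Cplx) (n : ℤ) (α : C.H n) : ∃ x hx, clsOf C n x hx = α := by
  induction α using QuotientAddGroup.induction_on with
  | H z => exact ⟨z.1, z.2, rfl⟩

lemma Hmap_clsOf {A B : Cplx} (g : Hom A B) (n : ℤ) (x : A.X n) (hx : x ∈ A.Zc n)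
    (hx' : g.f n x ∈ B.Zc n) :
    Hmap g n (clsOf A n x hx) = clsOf B n (g.f n x) hx' := rfl

end Cplx

namespace Cplx

section
variable {L M N : Cplx} (u : Hom L M) (q : Hom N M) (S : ∀ n, AddSubgroup (N.X n))
  (hS : ∀ (n : ℤ) (x : N.X n), x ∈ S n → N.d n x ∈ S (n + 1))

lemma coneD (n : ℤ) (l : L.X n) (x : (subCplx N S hS).X n) (m : M.X (n - 1)) :
    (cone (sumHom u (q.comp (subIncl N S hS)))).d n ((l, x), m) =
      ((L.d n l, (subCplx N S hS).d n x),
        M.tr (show n = n + 1 - 1 by omega)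
            ((Int.negOnePow (n + 1) : ℤ) • (u.f n l + q.f n x.1)) +
          M.tr (show n - 1 + 1 = n + 1 - 1 by omega) (M.d (n - 1) m)) := rfl

lemma cone_mem_Zc (n : ℤ) (l : L.X n) (x : (subCplx N S hS).X n) (m : M.X (n - 1)) :
    (((l, x), m) : (cone (sumHom u (q.comp (subIncl N S hS)))).X n) ∈
        (cone (sumHom u (q.comp (subIncl N S hS)))).Zc n ↔
      L.d n l = 0 ∧ N.d n x.1 = 0 ∧
        (Int.negOnePow (n + 1) : ℤ) • (u.f n l + q.f n x.1) +
          M.tr (show n - 1 + 1 = n by omega) (M.d (n - 1) m) = 0 := by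
  refine mem_Zc.trans ?_
  erw [coneD, Prod.ext_iff, Prod.ext_iff]
  simp only [Prod.fst_zero, Prod.snd_zero]
  rw [and_assoc]
  refine and_congr Iff.rfl (and_congr ?_ ?_)
  · exact ⟨fun h => congrArg Subtype.val h, fun h => Subtype.ext h⟩
  · erw [tr_add_tr, tr_eq_zero]

/-- Elements whose differential lies in the subcomplex. -/
def Zrel (n : ℤ) : AddSubgroup (N.X n) := (S (n + 1)).comap (N.d n)

/-- The connecting cocycle. -/
def dCo (n : ℤ) (a : N.X n) (ha : a ∈ Zrel S n) :
    (cone (sumHom u (q.comp (subIncl N S hS)))).X (n + 1) :=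
  ((0, ⟨N.d n a, ha⟩),
    M.tr (show n = n + 1 - 1 by omega) ((Int.negOnePow (n + 1) : ℤ) • q.f n a))

lemma dCo_mem (n : ℤ) (a : N.X n) (ha : a ∈ Zrel S n) :
    dCo u q S hS n a ha ∈ (cone (sumHom u (q.comp (subIncl N S hS)))).Zc (n + 1) := by
  unfold dCo; refine (cone_mem_Zc u q S hS (n + 1) _ _ _).2 ?_
  refine ⟨map_zero _, N.dsq n a, ?_⟩
  rw [map_zero, zero_add, d_tr, tr_tr, tr_refl, map_zsmul, ← q.comm, ← add_smul]
  have hco : ((Int.negOnePow (n + 1 + 1) : ℤ) + (Int.negOnePow (n + 1) : ℤ)) = 0 := by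
    rw [Int.negOnePow_succ (n + 1), Units.val_neg, neg_add_cancel]
  rw [hco, zero_smul]

lemma dCo_add (n : ℤ) (a b : N.X n) (ha : a ∈ Zrel S n) (hb : b ∈ Zrel S n)
    (hab : a + b ∈ Zrel S n) :
    dCo u q S hS n (a + b) hab = dCo u q S hS n a ha + dCo u q S hS n b hb := by
  unfold dCo
  refine Prod.ext (Prod.ext ?_ ?_) ?_
  · show (0 : L.X (n + 1)) = 0 + 0
    rw [add_zero]
  · exact Subtype.ext (map_add (N.d n) a b)
  · show M.tr _ _ = M.tr _ _ + M.tr _ _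
    rw [map_add (q.f n), smul_add]
    exact map_add _ _ _

/-- The induced map on cocycle classes, before descending to cohomology. -/
noncomputable def deltaAux (n : ℤ) :
    ↥(Zrel S n) →+ (cone (sumHom u (q.comp (subIncl N S hS)))).H (n + 1) :=
  AddMonoidHom.mk' (fun a => clsOf _ (n + 1) (dCo u q S hS n a.1 a.2)
      (dCo_mem u q S hS n a.1 a.2))
    (fun a b => by
      rw [clsOf_add _ _ _ (add_mem (dCo_mem u q S hS n a.1 a.2) (dCo_mem u q S hS n b.1 b.2))]
      exact clsOf_congr _ _ _ (dCo_add u q S hS n a.1 b.1 a.2 b.2 (a + b).2))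

lemma mkZc (n : ℤ) (a : ↥(Zrel S n)) :
    (QuotientAddGroup.mk a.1 : (quotCplx N S hS).X n) ∈ (quotCplx N S hS).Zc n := by
  refine mem_Zc.mpr ?_
  exact (QuotientAddGroup.eq_zero_iff (N.d n a.1)).2 a.2

/-- Representing cohomology classes of the quotient complex. -/
def toQH (n : ℤ) : ↥(Zrel S n) →+ (quotCplx N S hS).H n :=
  AddMonoidHom.mk' (fun a => clsOf _ n (QuotientAddGroup.mk a.1) (mkZc S hS n a))
    (fun a b => (clsOf_add (quotCplx N S hS) (mkZc S hS n a) (mkZc S hS n b)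
      (mkZc S hS n (a + b))).symm)

lemma toQH_surj (n : ℤ) : Function.Surjective (toQH S hS n) := by
  intro α
  obtain ⟨x, hx, rfl⟩ := H_surj _ n α
  obtain ⟨a, rfl⟩ := QuotientAddGroup.mk_surjective x
  have ha : a ∈ Zrel S n := (QuotientAddGroup.eq_zero_iff (N.d n a)).1 (mem_Zc.mp hx)
  exact ⟨⟨a, ha⟩, clsOf_congr _ (mkZc S hS n ⟨a, ha⟩) hx rfl⟩

lemma quot_tr {m n : ℤ} (h : m = n) (z : N.X m) :
    (quotCplx N S hS).tr h (QuotientAddGroup.mk z) = QuotientAddGroup.mk (N.tr h z) := by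
  subst h; rfl

lemma deltaAux_ker (n : ℤ) (a : ↥(Zrel S n)) (h0 : toQH S hS n a = 0) :
    deltaAux u q S hS n a = 0 := by
  have h1 : (QuotientAddGroup.mk a.1 : (quotCplx N S hS).X n) ∈ (quotCplx N S hS).Bd n :=
    (clsOf_eq_zero_iff _ (mkZc S hS n a)).1 h0
  replace h1 := (mem_Bd_iff _ (show n - 1 + 1 = n by omega) _).1 h1
  obtain ⟨ybar, hy⟩ := h1
  obtain ⟨y, rfl⟩ := QuotientAddGroup.mk_surjective ybar
  have hy' : (QuotientAddGroup.mk (N.tr (show n - 1 + 1 = n by omega) (N.d (n - 1) y)) :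
      (quotCplx N S hS).X n) = QuotientAddGroup.mk a.1 := by
    rw [← quot_tr S hS]; exact hy
  set b : N.X n := N.tr (show n - 1 + 1 = n by omega) (N.d (n - 1) y) with hbdef
  have hs : -b + a.1 ∈ S n := (QuotientAddGroup.eq).1 hy'
  have hb0 : N.d n b = 0 := by
    rw [hbdef, d_tr, N.dsq, map_zero]
  have hbZ : b ∈ Zrel S n := by
    show N.d n b ∈ S (n + 1)
    rw [hb0]; exact zero_mem _
  have hsZ : -b + a.1 ∈ Zrel S n := hS n _ hs
  have hdec : a = ⟨b, hbZ⟩ + ⟨-b + a.1, hsZ⟩ :=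
    Subtype.ext (add_neg_cancel_left b a.1).symm
  rw [hdec, map_add]
  have e1 : deltaAux u q S hS n ⟨b, hbZ⟩ = 0 := by
    refine (clsOf_eq_zero_iff _ (dCo_mem u q S hS n b hbZ)).2 ?_
    rw [mem_Bd_iff _ (show n + 1 = n + 1 from rfl)]
    refine ⟨((0, 0), (Int.negOnePow (n + 1) : ℤ) • q.f (n - 1) y), ?_⟩
    rw [tr_refl, coneD]
    unfold dCo
    refine Prod.ext (Prod.ext (map_zero _) (Subtype.ext ?_)) ?_
    · show ((subCplx N S hS).d n 0).1 = N.d n b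
      rw [map_zero, hb0]; rfl
    · show M.tr _ _ + M.tr _ _ = M.tr _ _
      erw [ZeroMemClass.coe_zero]
      rw [map_zero (u.f n), map_zero (q.f n), add_zero, smul_zero, map_zero (M.tr _),
        zero_add, map_zsmul (M.d (n - 1)), ← q.comm, hbdef, Hom.f_tr,
        ← map_zsmul (M.tr (show n - 1 + 1 = n by omega)), tr_tr]
  have e2 : deltaAux u q S hS n ⟨-b + a.1, hsZ⟩ = 0 := by
    refine (clsOf_eq_zero_iff _ (dCo_mem u q S hS n _ hsZ)).2 ?_
    rw [mem_Bd_iff _ (show n + 1 = n + 1 from rfl)]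
    refine ⟨((0, ⟨-b + a.1, hs⟩), 0), ?_⟩
    rw [tr_refl]; erw [coneD]
    unfold dCo
    refine Prod.ext (Prod.ext (map_zero _) (Subtype.ext rfl)) ?_
    show M.tr _ _ + M.tr _ _ = M.tr _ _
    rw [map_zero (M.d (n - 1)), map_zero (M.tr _), add_zero, map_zero (u.f n), zero_add]
  rw [e1, e2, add_zero]

/-- The connecting homomorphism. -/
noncomputable def delta (n : ℤ) :
    (quotCplx N S hS).H n →+ (cone (sumHom u (q.comp (subIncl N S hS)))).H (n + 1) :=
  (toQH S hS n).liftOfRightInverse (Function.surjInv (toQH_surj S hS n))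
    (Function.rightInverse_surjInv (toQH_surj S hS n))
    ⟨deltaAux u q S hS n, fun a ha =>
      AddMonoidHom.mem_ker.2 (deltaAux_ker u q S hS n a (AddMonoidHom.mem_ker.1 ha))⟩

lemma delta_toQH (n : ℤ) (a : ↥(Zrel S n)) :
    delta u q S hS n (toQH S hS n a) = deltaAux u q S hS n a :=
  AddMonoidHom.liftOfRightInverse_comp_apply _ _ _ _ a

end

end Cplx

namespace Cplx

section
variable {L M N : Cplx} (u : Hom L M) (q : Hom N M) (S : ∀ n, AddSubgroup (N.X n))
  (hS : ∀ (n : ℤ) (x : N.X n), x ∈ S n → N.d n x ∈ S (n + 1))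

lemma eps_mul (n : ℤ) : ((Int.negOnePow n : ℤ)) * ((Int.negOnePow n : ℤ)) = 1 := by
  rw [← Units.val_mul, Int.units_mul_self, Units.val_one]

lemma beta_eq (n : ℤ) (hq : Function.Bijective (Hmap q n)) (α : L.H n)
    (a : N.X n) (ha : a ∈ N.Zc n)
    (h : Hmap q n (clsOf N n a ha) = Hmap u n α)
    (hqa : (QuotientAddGroup.mk a : (quotCplx N S hS).X n) ∈ (quotCplx N S hS).Zc n) :
    ((Hmap (quotProj N S hS) n).comp
      ((AddEquiv.ofBijective (Hmap q n) hq).symm.toAddMonoidHom.comp (Hmap u n))) α =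
    clsOf (quotCplx N S hS) n (QuotientAddGroup.mk a) hqa := by
  have h1 : (AddEquiv.ofBijective (Hmap q n) hq).symm (Hmap u n α) = clsOf N n a ha := by
    apply (AddEquiv.ofBijective (Hmap q n) hq).injective
    rw [AddEquiv.apply_symm_apply]
    exact h.symm
  show Hmap (quotProj N S hS) n ((AddEquiv.ofBijective (Hmap q n) hq).symm (Hmap u n α)) = _
  rw [h1, Hmap_clsOf _ _ _ _ hqa]
  exact clsOf_congr _ hqa hqa rfl

lemma beta_rep (n : ℤ) (hq : Function.Bijective (Hmap q n)) (α : L.H n) :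
    ∃ a ha, Hmap q n (clsOf N n a ha) = Hmap u n α := by
  obtain ⟨a, ha, h⟩ := H_surj N n ((AddEquiv.ofBijective (Hmap q n) hq).symm (Hmap u n α))
  refine ⟨a, ha, ?_⟩
  rw [h]
  exact AddEquiv.apply_symm_apply (AddEquiv.ofBijective (Hmap q n) hq) (Hmap u n α)

lemma mk_mem_Zc (n : ℤ) (a : N.X n) (ha : a ∈ N.Zc n) :
    (QuotientAddGroup.mk a : (quotCplx N S hS).X n) ∈ (quotCplx N S hS).Zc n := by
  refine mem_Zc.mpr ?_
  exact (QuotientAddGroup.eq_zero_iff (N.d n a)).2 (by rw [mem_Zc.mp ha]; exact zero_mem _)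

lemma exact2 (n : ℤ) (hq : Function.Bijective (Hmap q n)) :
    (Hmap (coneProjL u (q.comp (subIncl N S hS))) n).range =
      ((Hmap (quotProj N S hS) n).comp
        ((AddEquiv.ofBijective (Hmap q n) hq).symm.toAddMonoidHom.comp (Hmap u n))).ker := by
  ext α
  rw [AddMonoidHom.mem_range, AddMonoidHom.mem_ker]
  constructor
  · rintro ⟨γ, rfl⟩
    obtain ⟨c, hc, rfl⟩ := H_surj _ n γ
    obtain ⟨⟨l, x⟩, m⟩ := c
    obtain ⟨hl, hx, hm⟩ := (cone_mem_Zc u q S hS n l x m).1 hc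
    erw [Hmap_clsOf _ _ _ _ (mem_Zc.mpr hl)]
    have hxz : (-x.1) ∈ N.Zc n := mem_Zc.mpr (by rw [map_neg, hx, neg_zero])
    have hB : u.f n l - q.f n (-x.1) ∈ M.Bd n := by
      rw [mem_Bd_iff _ (show n - 1 + 1 = n by omega)]
      refine ⟨(-(Int.negOnePow (n + 1) : ℤ)) • m, ?_⟩
      have h9 : M.tr (show n - 1 + 1 = n by omega) (M.d (n - 1) m) =
          -((Int.negOnePow (n + 1) : ℤ) • (u.f n l + q.f n x.1)) :=
        eq_neg_of_add_eq_zero_right hm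
      rw [map_zsmul, map_zsmul, neg_smul, h9, smul_neg, smul_smul, eps_mul, one_smul,
        neg_neg, map_neg (q.f n), sub_neg_eq_add]
    have hkey : Hmap q n (clsOf N n (-x.1) hxz) =
        Hmap u n (clsOf L n ((coneProjL u (q.comp (subIncl N S hS))).f n ((l, x), m))
          (mem_Zc.mpr hl)) := by
      rw [Hmap_clsOf _ _ _ _ (by rw [mem_Zc, ← q.comm, mem_Zc.mp hxz, map_zero]),
        Hmap_clsOf _ _ _ _ (by rw [mem_Zc, ← u.comm]; show u.f (n + 1) (L.d n l) = 0; rw [hl, map_zero])]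
      exact (clsOf_eq_iff M _ _).2 hB
    rw [beta_eq u q S hS n hq _ (-x.1) hxz hkey (mk_mem_Zc S hS n _ hxz)]
    refine (clsOf_eq_zero_iff _ _).2 ?_
    have hq0 : (QuotientAddGroup.mk (-x.1) : (quotCplx N S hS).X n) = 0 :=
      (QuotientAddGroup.eq_zero_iff _).2 (neg_mem x.2)
    rw [hq0]
    exact zero_mem _
  · intro h0
    obtain ⟨l, hl, rfl⟩ := H_surj L n α
    obtain ⟨a, ha, hqa⟩ := beta_rep u q n hq (clsOf L n l hl)
    rw [beta_eq u q S hS n hq _ a ha hqa (mk_mem_Zc S hS n a ha)] at h0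
    have h1 : (QuotientAddGroup.mk a : (quotCplx N S hS).X n) ∈ (quotCplx N S hS).Bd n :=
      (clsOf_eq_zero_iff _ _).1 h0
    replace h1 := (mem_Bd_iff _ (show n - 1 + 1 = n by omega) _).1 h1
    obtain ⟨ybar, hy⟩ := h1
    obtain ⟨y, rfl⟩ := QuotientAddGroup.mk_surjective ybar
    have hy' : (QuotientAddGroup.mk (N.tr (show n - 1 + 1 = n by omega) (N.d (n - 1) y)) :
        (quotCplx N S hS).X n) = QuotientAddGroup.mk a := by
      rw [← quot_tr S hS]; exact hy
    set b : N.X n := N.tr (show n - 1 + 1 = n by omega) (N.d (n - 1) y) with hbdef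
    have hs : -b + a ∈ S n := (QuotientAddGroup.eq).1 hy'
    have hb0 : N.d n b = 0 := by rw [hbdef, d_tr, N.dsq, map_zero]
    have hsz : -b + a ∈ N.Zc n := by
      rw [mem_Zc, map_add, map_neg, hb0, neg_zero, zero_add]
      exact mem_Zc.mp ha
    have hbB : b ∈ N.Bd n := by
      rw [mem_Bd_iff _ (show n - 1 + 1 = n by omega)]
      exact ⟨y, rfl⟩
    have hcls : clsOf N n a ha = clsOf N n (-b + a) hsz := by
      refine (clsOf_eq_iff _ _ _).2 ?_
      have : -b + a - a = -b := by abel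
      rw [this]
      exact neg_mem hbB
    rw [hcls] at hqa
    have hqsZ : q.f n (-b + a) ∈ M.Zc n := by
      rw [mem_Zc, ← q.comm, mem_Zc.mp hsz, map_zero]
    have hulZ : u.f n l ∈ M.Zc n := by
      rw [mem_Zc, ← u.comm, mem_Zc.mp hl, map_zero]
    rw [Hmap_clsOf _ _ _ _ hqsZ, Hmap_clsOf _ _ _ _ hulZ] at hqa
    have hB : u.f n l - q.f n (-b + a) ∈ M.Bd n := (clsOf_eq_iff M _ _).1 hqa
    rw [mem_Bd_iff _ (show n - 1 + 1 = n by omega)] at hB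
    obtain ⟨m₁, hm₁⟩ := hB
    -- construct the cone cocycle
    set s : N.X n := -b + a with hsdef
    set x : (subCplx N S hS).X n := ⟨-s, neg_mem hs⟩ with hxdef
    have hcz : (((l, x), (-(Int.negOnePow (n + 1) : ℤ)) • m₁) :
        (cone (sumHom u (q.comp (subIncl N S hS)))).X n) ∈
        (cone (sumHom u (q.comp (subIncl N S hS)))).Zc n := by
      rw [cone_mem_Zc]
      refine ⟨hl, ?_, ?_⟩
      · show N.d n (-s) = 0
        rw [map_neg, mem_Zc.mp hsz, neg_zero]
      · show (Int.negOnePow (n + 1) : ℤ) • (u.f n l + q.f n (-s)) +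
          M.tr _ (M.d (n - 1) ((-(Int.negOnePow (n + 1) : ℤ)) • m₁)) = 0
        rw [map_neg (q.f n), ← sub_eq_add_neg, map_zsmul, map_zsmul, hm₁, neg_smul,
          ← sub_eq_add_neg, sub_self]
    refine ⟨clsOf _ n (((l, x), (-(Int.negOnePow (n + 1) : ℤ)) • m₁)) hcz, ?_⟩
    erw [Hmap_clsOf (coneProjL u (q.comp (subIncl N S hS))) n _ hcz hl]
    exact clsOf_congr _ _ _ rfl

end

end Cplx

namespace Cplx

section
variable {L M N : Cplx} (u : Hom L M) (q : Hom N M) (S : ∀ n, AddSubgroup (N.X n))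
  (hS : ∀ (n : ℤ) (x : N.X n), x ∈ S n → N.d n x ∈ S (n + 1))

lemma exact3 (n : ℤ) (hq : Function.Bijective (Hmap q n)) :
    ((Hmap (quotProj N S hS) n).comp
        ((AddEquiv.ofBijective (Hmap q n) hq).symm.toAddMonoidHom.comp (Hmap u n))).range =
      (delta u q S hS n).ker := by
  ext γ
  rw [AddMonoidHom.mem_range, AddMonoidHom.mem_ker]
  constructor
  · rintro ⟨α, rfl⟩
    obtain ⟨l, hl, rfl⟩ := H_surj L n α
    obtain ⟨a, ha, hqa⟩ := beta_rep u q n hq (clsOf L n l hl)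
    have haZ : a ∈ Zrel S n := by
      show N.d n a ∈ S (n + 1)
      rw [mem_Zc.mp ha]; exact zero_mem _
    rw [beta_eq u q S hS n hq _ a ha hqa (mk_mem_Zc S hS n a ha)]
    have hT : clsOf (quotCplx N S hS) n (QuotientAddGroup.mk a) (mk_mem_Zc S hS n a ha) =
        toQH S hS n ⟨a, haZ⟩ := clsOf_congr _ _ _ rfl
    rw [hT, delta_toQH]
    -- extract a boundary for u l - q a
    have hqsZ : q.f n a ∈ M.Zc n := by rw [mem_Zc, ← q.comm, mem_Zc.mp ha, map_zero]
    have hulZ : u.f n l ∈ M.Zc n := by rw [mem_Zc, ← u.comm, mem_Zc.mp hl, map_zero]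
    rw [Hmap_clsOf _ _ _ _ hqsZ, Hmap_clsOf _ _ _ _ hulZ] at hqa
    have hB : u.f n l - q.f n a ∈ M.Bd n := (clsOf_eq_iff M _ _).1 hqa
    rw [mem_Bd_iff _ (show n - 1 + 1 = n by omega)] at hB
    obtain ⟨m₀, hm₀⟩ := hB
    refine (clsOf_eq_zero_iff _ (dCo_mem u q S hS n a haZ)).2 ?_
    rw [mem_Bd_iff _ (show n + 1 = n + 1 from rfl)]
    refine ⟨((l, 0), (-(Int.negOnePow (n + 1) : ℤ)) • m₀), ?_⟩
    rw [tr_refl, coneD]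
    unfold dCo
    refine Prod.ext (Prod.ext ?_ (Subtype.ext ?_)) ?_
    · exact mem_Zc.mp hl
    · rw [map_zero]
      show (0 : N.X (n + 1)) = N.d n a
      rw [mem_Zc.mp ha]
    · show M.tr _ _ + M.tr _ _ = M.tr _ _
      erw [ZeroMemClass.coe_zero]
      rw [map_zero (q.f n), add_zero, sub_eq_iff_eq_add.mp hm₀.symm, smul_add,
        map_add (M.tr (show n = n + 1 - 1 by omega)),
        ← map_zsmul (M.tr (show n - 1 + 1 = n by omega)), tr_tr,
        map_zsmul (M.d (n - 1)), neg_smul, map_neg]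
      abel
  · intro h0
    obtain ⟨⟨a, haZ⟩, rfl⟩ := toQH_surj S hS n γ
    rw [delta_toQH] at h0
    have hBd : dCo u q S hS n a haZ ∈
        (cone (sumHom u (q.comp (subIncl N S hS)))).Bd (n + 1) :=
      (clsOf_eq_zero_iff _ (dCo_mem u q S hS n a haZ)).1 h0
    rw [mem_Bd_iff _ (show n + 1 = n + 1 from rfl)] at hBd
    obtain ⟨e, he⟩ := hBd
    rw [tr_refl] at he
    obtain ⟨⟨l', x'⟩, m'⟩ := e
    rw [coneD] at he
    unfold dCo at he
    obtain ⟨he1, he3⟩ := Prod.ext_iff.1 he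
    obtain ⟨hel, hex⟩ := Prod.ext_iff.1 he1
    have hl' : l' ∈ L.Zc n := mem_Zc.mpr hel
    have hdx : N.d n x'.1 = N.d n a := congrArg Subtype.val hex
    have he3' : (Int.negOnePow (n + 1) : ℤ) • (u.f n l' + q.f n x'.1) +
        M.tr (show n - 1 + 1 = n by omega) (M.d (n - 1) m') =
        (Int.negOnePow (n + 1) : ℤ) • q.f n a := by
      have := he3
      rw [tr_add_tr] at this
      exact (tr_inj M _).1 this
    have ha' : a - x'.1 ∈ N.Zc n := by
      rw [mem_Zc, map_sub, hdx, sub_self]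
    -- u l' - q (a - x') is a boundary
    have hB : u.f n l' - q.f n (a - x'.1) ∈ M.Bd n := by
      rw [mem_Bd_iff _ (show n - 1 + 1 = n by omega)]
      refine ⟨(-(Int.negOnePow (n + 1) : ℤ)) • m', ?_⟩
      have h5 : (Int.negOnePow (n + 1) : ℤ) • q.f n (a - x'.1) =
          (Int.negOnePow (n + 1) : ℤ) • u.f n l' +
            M.tr (show n - 1 + 1 = n by omega) (M.d (n - 1) m') := by
        rw [map_sub (q.f n), smul_sub, ← he3', smul_add]
        abel
      have h6 : q.f n (a - x'.1) = u.f n l' +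
          (Int.negOnePow (n + 1) : ℤ) • M.tr (show n - 1 + 1 = n by omega)
            (M.d (n - 1) m') := by
        have := congrArg (fun z => (Int.negOnePow (n + 1) : ℤ) • z) h5
        simp only [smul_add, smul_smul, eps_mul, one_smul] at this
        exact this
      rw [map_zsmul, map_zsmul, neg_smul, h6]
      abel
    have hqeq : Hmap q n (clsOf N n (a - x'.1) ha') = Hmap u n (clsOf L n l' hl') := by
      rw [Hmap_clsOf _ _ _ _ (by rw [mem_Zc, ← q.comm, mem_Zc.mp ha', map_zero]),
        Hmap_clsOf _ _ _ _ (by rw [mem_Zc, ← u.comm, mem_Zc.mp hl', map_zero])]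
      exact (clsOf_eq_iff M _ _).2 hB
    refine ⟨clsOf L n l' hl', ?_⟩
    rw [beta_eq u q S hS n hq _ (a - x'.1) ha' hqeq (mk_mem_Zc S hS n _ ha')]
    have hmk : (QuotientAddGroup.mk (a - x'.1) : (quotCplx N S hS).X n) =
        QuotientAddGroup.mk a := by
      rw [QuotientAddGroup.eq]
      have : -(a - x'.1) + a = x'.1 := by abel
      rw [this]
      exact x'.2
    refine Eq.trans (clsOf_congr _ _ (mkZc S hS n ⟨a, haZ⟩) hmk) rfl
end

end Cplx

namespace Cplx

section
variable {L M N : Cplx} (u : Hom L M) (q : Hom N M) (S : ∀ n, AddSubgroup (N.X n))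
  (hS : ∀ (n : ℤ) (x : N.X n), x ∈ S n → N.d n x ∈ S (n + 1))

lemma exact1 (n : ℤ) (hqi : Function.Injective (Hmap q (n + 1)))
    (hqs : Function.Surjective (Hmap q n)) :
    (delta u q S hS n).range =
      (Hmap (coneProjL u (q.comp (subIncl N S hS))) (n + 1)).ker := by
  ext γ
  rw [AddMonoidHom.mem_range, AddMonoidHom.mem_ker]
  constructor
  · rintro ⟨α, rfl⟩
    obtain ⟨a, rfl⟩ := toQH_surj S hS n α
    rw [delta_toQH]
    show Hmap (coneProjL u (q.comp (subIncl N S hS))) (n + 1)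
      (clsOf _ (n + 1) (dCo u q S hS n a.1 a.2) (dCo_mem u q S hS n a.1 a.2)) = 0
    rw [Hmap_clsOf _ _ _ _ (by rw [mem_Zc]; show L.d (n + 1) 0 = 0; exact map_zero _)]
    refine (clsOf_eq_zero_iff _ _).2 ?_
    show (0 : L.X (n + 1)) ∈ L.Bd (n + 1)
    exact zero_mem _
  · intro hγ
    obtain ⟨c, hc, rfl⟩ := H_surj _ (n + 1) γ
    obtain ⟨⟨l, x⟩, m⟩ := c
    obtain ⟨hl, hx, hm⟩ := (cone_mem_Zc u q S hS (n + 1) l x m).1 hc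
    erw [Hmap_clsOf _ _ _ _ (mem_Zc.mpr hl)] at hγ
    have hlB : l ∈ L.Bd (n + 1) := (clsOf_eq_zero_iff _ _).1 hγ
    rw [mem_Bd_iff _ (show n + 1 = n + 1 from rfl)] at hlB
    obtain ⟨l₀, hl₀⟩ := hlB
    rw [tr_refl] at hl₀
    have hneg : (Int.negOnePow (n + 1 + 1) : ℤ) = -(Int.negOnePow (n + 1) : ℤ) := by
      rw [Int.negOnePow_succ, Units.val_neg]
    have hdm : M.d n (M.tr (show n + 1 - 1 = n by omega) m) =
        (Int.negOnePow (n + 1) : ℤ) • (u.f (n + 1) l + q.f (n + 1) x.1) := by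
      rw [d_tr]
      have h8 : M.tr (show n + 1 - 1 + 1 = n + 1 by omega) (M.d (n + 1 - 1) m) =
          -((Int.negOnePow (n + 1 + 1) : ℤ) • (u.f (n + 1) l + q.f (n + 1) x.1)) :=
        eq_neg_of_add_eq_zero_right hm
      rw [h8, hneg, neg_smul, neg_neg]
    set w : M.X n := (Int.negOnePow (n + 1) : ℤ) • M.tr (show n + 1 - 1 = n by omega) m
      - u.f n l₀ with hwdef
    have hul : u.f (n + 1) l = M.d n (u.f n l₀) := by rw [← hl₀, u.comm]
    have hqx : M.d n w = q.f (n + 1) x.1 := by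
      rw [hwdef, map_sub, map_zsmul, hdm, smul_smul, eps_mul, one_smul, ← hul]
      abel
    have hxZ : x.1 ∈ N.Zc (n + 1) := mem_Zc.mpr hx
    have hqxZ : q.f (n + 1) x.1 ∈ M.Zc (n + 1) := by
      rw [mem_Zc, ← q.comm, hx, map_zero]
    have hqx0 : clsOf M (n + 1) (q.f (n + 1) x.1) hqxZ = 0 := by
      refine (clsOf_eq_zero_iff _ _).2 ?_
      rw [mem_Bd_iff _ (show n + 1 = n + 1 from rfl)]
      exact ⟨w, by rw [tr_refl]; exact hqx⟩
    have hx0 : clsOf N (n + 1) x.1 hxZ = 0 := by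
      apply hqi
      rw [map_zero, Hmap_clsOf _ _ _ _ hqxZ]
      exact hqx0
    have hxB : x.1 ∈ N.Bd (n + 1) := (clsOf_eq_zero_iff _ _).1 hx0
    rw [mem_Bd_iff _ (show n + 1 = n + 1 from rfl)] at hxB
    obtain ⟨n₀, hn₀⟩ := hxB
    rw [tr_refl] at hn₀
    have hwz : w - q.f n n₀ ∈ M.Zc n := by
      rw [mem_Zc, map_sub, hqx, ← q.comm, hn₀, sub_self]
    obtain ⟨α₀, hα₀⟩ := hqs (clsOf M n (w - q.f n n₀) hwz)
    obtain ⟨z, hz, rfl⟩ := H_surj N n α₀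
    have hqzZ : q.f n z ∈ M.Zc n := by rw [mem_Zc, ← q.comm, mem_Zc.mp hz, map_zero]
    rw [Hmap_clsOf _ _ _ _ hqzZ] at hα₀
    have hB2 : (w - q.f n n₀) - q.f n z ∈ M.Bd n := (clsOf_eq_iff M _ _).1 hα₀
    rw [mem_Bd_iff _ (show n - 1 + 1 = n by omega)] at hB2
    obtain ⟨m₀, hm₀⟩ := hB2
    have hz0 : N.d n z = 0 := mem_Zc.mp hz
    have hda : N.d n (n₀ + z) = x.1 := by rw [map_add, hn₀, hz0, add_zero]
    have haZ : n₀ + z ∈ Zrel S n := by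
      show N.d n (n₀ + z) ∈ S (n + 1)
      rw [hda]; exact x.2
    refine ⟨toQH S hS n ⟨n₀ + z, haZ⟩, ?_⟩
    rw [delta_toQH]
    show clsOf _ (n + 1) (dCo u q S hS n (n₀ + z) haZ) (dCo_mem u q S hS n (n₀ + z) haZ) =
      clsOf _ (n + 1) ((l, x), m) hc
    refine (clsOf_eq_iff _ _ _).2 ?_
    rw [mem_Bd_iff _ (show n + 1 = n + 1 from rfl)]
    refine ⟨((l₀, 0), (Int.negOnePow (n + 1) : ℤ) • m₀), ?_⟩
    rw [tr_refl, coneD]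
    unfold dCo
    refine Prod.ext (Prod.ext ?_ (Subtype.ext ?_)) ?_
    · show L.d n l₀ = l - 0
      rw [sub_zero]; exact hl₀
    · rw [map_zero]
      show (0 : N.X (n + 1)) = x.1 - N.d n (n₀ + z)
      rw [hda, sub_self]
    · show M.tr _ _ + M.tr _ _ = m - M.tr _ _
      erw [ZeroMemClass.coe_zero]
      have hqa : q.f n (n₀ + z) = w - M.tr (show n - 1 + 1 = n by omega) (M.d (n - 1) m₀) := by
        rw [map_add, hm₀]; abel
      have h6 : (Int.negOnePow (n + 1) : ℤ) • w =
          M.tr (show n + 1 - 1 = n by omega) m - (Int.negOnePow (n + 1) : ℤ) • u.f n l₀ := by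
        rw [hwdef, smul_sub, smul_smul, eps_mul, one_smul]
      rw [map_zero (q.f n), add_zero, hqa, smul_sub, h6,
        map_sub (M.tr (show n = n + 1 - 1 by omega)),
        map_sub (M.tr (show n = n + 1 - 1 by omega)), tr_tr, tr_refl,
        ← map_zsmul (M.tr (show n - 1 + 1 = n by omega)), tr_tr,
        map_zsmul (M.d (n - 1))]
      abel

end

end Cplx

open Cplx in
/-- The long exact sequence
`⋯ → H^n(N/F) → H^{n+1}(Cone(φ)) → H^{n+1}(L) → H^{n+1}(N/F) → ⋯`. -/
theorem stmt7 (L M N : Cplx) (u : Cplx.Hom L M) (q : Cplx.Hom N M)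
    (hq : ∀ n, Function.Bijective (Hmap q n))
    (S : ∀ n, AddSubgroup (N.X n))
    (hS : ∀ (n : ℤ) (x : N.X n), x ∈ S n → N.d n x ∈ S (n + 1)) :
    ∃ δ : ∀ n : ℤ, (quotCplx N S hS).H n →+
        (cone (sumHom u (q.comp (subIncl N S hS)))).H (n + 1),
      ∀ n : ℤ,
        ((δ n).range = (Hmap (Cplx.coneProjL u (q.comp (subIncl N S hS))) (n + 1)).ker) ∧
        ((Hmap (Cplx.coneProjL u (q.comp (subIncl N S hS))) (n + 1)).range =
          ((Hmap (quotProj N S hS) (n + 1)).comp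
            ((AddEquiv.ofBijective (Hmap q (n + 1)) (hq (n + 1))).symm.toAddMonoidHom.comp
              (Hmap u (n + 1)))).ker) ∧
        (((Hmap (quotProj N S hS) (n + 1)).comp
            ((AddEquiv.ofBijective (Hmap q (n + 1)) (hq (n + 1))).symm.toAddMonoidHom.comp
              (Hmap u (n + 1)))).range = (δ (n + 1)).ker) := by
  refine ⟨fun n => delta u q S hS n, fun n => ⟨?_, ?_, ?_⟩⟩
  · exact exact1 u q S hS n (hq (n + 1)).1 (hq n).2
  · exact exact2 u q S hS (n + 1) (hq (n + 1))
  · exact exact3 u q S hS (n + 1) (hq (n + 1))
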